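/- Let n ≥ 1 be an integer and let q, β, δ, E_P, E_I be real numbers with δ > 0, E_I > 0 (so 1 + E_I·δ ≠ 0). Let θ(·), v', g₁', g₂', F be functions such that 0 ≤ F(θ(q)) < 1. Suppose the first-order condition (1−F(θ(q)))^{n−1}·(v'(q) − (1+E_P·δ)·θ(q)^{E_P}·g₁'(q)) − β·(1+E_I·δ)·θ(q)^{E_I}·g₂'(q) = 0 holds, and that s'(q) = θ(q)^{E_P}·g₁'(q) + β·θ(q)^{E_I}·g₂'(q)/(1−F(θ(q)))^{n−1}. Then s'(q) = (v'(q) + δ·(E_I − E_P)·θ(q)^{E_P}·g₁'(q))/(1 + E_I·δ). -/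
import Mathlib

/-- Key identity in the proof of Proposition 4 (elmatters): with
`F(θ) = θ^{1/δ}`, `C^P(q,θ) = θ^{E_P} g₁(q)`, `C^I(q,θ) = β θ^{E_I} g₂(q)`,
if the first-order condition
`(1−F(θ(q)))^{n−1}(v'(q) − (1+E_P δ)θ(q)^{E_P} g₁'(q)) − β(1+E_I δ)θ(q)^{E_I} g₂'(q) = 0`
and the scoring-rule characterization
`s'(q) = θ(q)^{E_P} g₁'(q) + β θ(q)^{E_I} g₂'(q)/(1−F(θ(q)))^{n−1}` hold, then
`s'(q) = (v'(q) + δ(E_I − E_P)θ(q)^{E_P} g₁'(q))/(1 + E_I δ)`. -/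
theorem stmt_10
    (n : ℕ) (hn : 1 ≤ n) (q β δ EP EI : ℝ) (hδ : 0 < δ) (hEI : 0 < EI)
    (th vd g1d g2d sd F : ℝ → ℝ)
    (hF0 : 0 ≤ F (th q)) (hF1 : F (th q) < 1)
    (hFOC : (1 - F (th q)) ^ (n - 1)
        * (vd q - (1 + EP * δ) * th q ^ EP * g1d q)
      - β * (1 + EI * δ) * th q ^ EI * g2d q = 0)
    (hscore : sd q = th q ^ EP * g1d q
      + β * th q ^ EI * g2d q / (1 - F (th q)) ^ (n - 1)) :
    sd q = (vd q + δ * (EI - EP) * th q ^ EP * g1d q) / (1 + EI * δ) := by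
  have hA : (0:ℝ) < (1 - F (th q)) ^ (n - 1) := pow_pos (by linarith) _
  have hA' : (1 - F (th q)) ^ (n - 1) ≠ 0 := ne_of_gt hA
  have hden : (1 : ℝ) + EI * δ ≠ 0 := by positivity
  rw [hscore]
  field_simp
  nlinarith [hFOC, sq_nonneg ((1 - F (th q)) ^ (n - 1))]
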